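/- For complex numbers γ and γ̃ with γ̃, γ real and γ̃² < 1 + γ², the two roots λ± = e^{iα}(γ̃ ± i√(1+γ² − γ̃²))/(1 + iγ) of the polynomial ρ(ζ) = e^{−iα}(1+iγ)ζ² − 2γ̃ζ + e^{iα}(1−iγ) both have modulus 1. -/

import Mathlib

open Complex in
theorem stmt_5 (α γ γt : ℝ) (h : γt ^ 2 < 1 + γ ^ 2)
    (lamP lamM : ℂ)
    (hP : lamP = Complex.exp (I * α) *
      (((γt : ℂ) + I * (Real.sqrt (1 + γ ^ 2 - γt ^ 2) : ℝ)) / (1 + I * (γ : ℂ))))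
    (hM : lamM = Complex.exp (I * α) *
      (((γt : ℂ) - I * (Real.sqrt (1 + γ ^ 2 - γt ^ 2) : ℝ)) / (1 + I * (γ : ℂ))))
    (ρ : ℂ → ℂ)
    (hρ : ρ = fun ζ => Complex.exp (-(I * α)) * (1 + I * (γ : ℂ)) * ζ ^ 2
      - 2 * (γt : ℂ) * ζ + Complex.exp (I * α) * (1 - I * (γ : ℂ))) :
    ‖lamP‖ = 1 ∧ ‖lamM‖ = 1 ∧ ρ lamP = 0 ∧ ρ lamM = 0 := by
  set s : ℝ := Real.sqrt (1 + γ ^ 2 - γt ^ 2) with hsdef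
  have hs : s ^ 2 = 1 + γ ^ 2 - γt ^ 2 := Real.sq_sqrt (by linarith)
  have hsC : (s : ℂ) ^ 2 = 1 + (γ : ℂ) ^ 2 - (γt : ℂ) ^ 2 := by exact_mod_cast hs
  have hI : (I : ℂ) ^ 2 = -1 := Complex.I_sq
  have hden : (1 + I * (γ : ℂ)) ≠ 0 := by
    intro hc
    have := congrArg Complex.re hc
    simp at this
  have hE : Complex.exp (I * α) ≠ 0 := Complex.exp_ne_zero _
  have hEinv : Complex.exp (-(I * α)) = (Complex.exp (I * α))⁻¹ := by
    rw [← Complex.exp_neg]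
  have habsE : ‖Complex.exp (I * α)‖ = 1 := by
    simp [Complex.norm_exp]
  have habsden : ‖1 + I * (γ : ℂ)‖ ^ 2 = 1 + γ ^ 2 := by
    rw [Complex.sq_norm, Complex.normSq_apply]
    simp
    ring
  have hdpos : (0:ℝ) < 1 + γ ^ 2 := by positivity
  have habsP : ‖(γt : ℂ) + I * (s : ℂ)‖ ^ 2 = 1 + γ ^ 2 := by
    rw [Complex.sq_norm, Complex.normSq_apply]
    simp
    nlinarith [hs]
  have habsM : ‖(γt : ℂ) - I * (s : ℂ)‖ ^ 2 = 1 + γ ^ 2 := by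
    rw [Complex.sq_norm, Complex.normSq_apply]
    simp
    nlinarith [hs]
  have habsden' : ‖1 + I * (γ : ℂ)‖ ≠ 0 :=
    (norm_ne_zero_iff).mpr hden
  refine ⟨?_, ?_, ?_, ?_⟩
  · rw [hP, norm_mul, habsE, one_mul, norm_div, div_eq_one_iff_eq habsden']
    have := habsP.trans habsden.symm
    have h1 := norm_nonneg ((γt : ℂ) + I * (s : ℂ))
    have h2 := norm_nonneg (1 + I * (γ : ℂ))
    nlinarith [this]
  · rw [hM, norm_mul, habsE, one_mul, norm_div, div_eq_one_iff_eq habsden']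
    have := habsM.trans habsden.symm
    have h1 := norm_nonneg ((γt : ℂ) - I * (s : ℂ))
    have h2 := norm_nonneg (1 + I * (γ : ℂ))
    nlinarith [this]
  · rw [hρ, hP]
    have hfac : Complex.exp (-(I * α)) * (1 + I * (γ:ℂ)) *
        (Complex.exp (I * α) * (((γt : ℂ) + I * (s:ℂ)) / (1 + I * (γ : ℂ)))) ^ 2
        - 2 * (γt : ℂ) * (Complex.exp (I * α) * (((γt : ℂ) + I * (s:ℂ)) / (1 + I * (γ : ℂ))))
        + Complex.exp (I * α) * (1 - I * (γ:ℂ))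
        = Complex.exp (I * α) / (1 + I * (γ:ℂ)) *
          (((γt : ℂ) + I * (s:ℂ)) ^ 2 - 2 * (γt:ℂ) * ((γt : ℂ) + I * (s:ℂ))
            + (1 - I * (γ:ℂ)) * (1 + I * (γ:ℂ))) := by
      rw [hEinv]; field_simp
    have hkey : ((γt : ℂ) + I * (s:ℂ)) ^ 2 - 2 * (γt:ℂ) * ((γt : ℂ) + I * (s:ℂ))
        + (1 - I * (γ:ℂ)) * (1 + I * (γ:ℂ)) = 0 := by
      linear_combination ((s:ℂ)^2 - (γ:ℂ)^2) * hI - hsC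
    simp only [hfac, hkey, mul_zero]
  · rw [hρ, hM]
    have hfac : Complex.exp (-(I * α)) * (1 + I * (γ:ℂ)) *
        (Complex.exp (I * α) * (((γt : ℂ) - I * (s:ℂ)) / (1 + I * (γ : ℂ)))) ^ 2
        - 2 * (γt : ℂ) * (Complex.exp (I * α) * (((γt : ℂ) - I * (s:ℂ)) / (1 + I * (γ : ℂ))))
        + Complex.exp (I * α) * (1 - I * (γ:ℂ))
        = Complex.exp (I * α) / (1 + I * (γ:ℂ)) *
          (((γt : ℂ) - I * (s:ℂ)) ^ 2 - 2 * (γt:ℂ) * ((γt : ℂ) - I * (s:ℂ))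
            + (1 - I * (γ:ℂ)) * (1 + I * (γ:ℂ))) := by
      rw [hEinv]; field_simp
    have hkey : ((γt : ℂ) - I * (s:ℂ)) ^ 2 - 2 * (γt:ℂ) * ((γt : ℂ) - I * (s:ℂ))
        + (1 - I * (γ:ℂ)) * (1 + I * (γ:ℂ)) = 0 := by
      linear_combination ((s:ℂ)^2 - (γ:ℂ)^2) * hI - hsC
    simp only [hfac, hkey, mul_zero]
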